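/- Let d ≥ 2 and m ≥ 2. Suppose p_1, …, p_m, p* ∈ ℝ^d satisfy p* ≠ p_j and g*_j = (p_j − p*)/‖p_j − p*‖ for all j, with the bearings g*_1, …, g*_m pairwise non-parallel. Let φ : [0, ∞) → ℝ^d be any solution of the follower dynamics, i.e., φ is differentiable, φ(t) ≠ p_j for all t ≥ 0 and all j, and φ′(t) = −Σ_{j=1}^{m} P_{(p_j − φ(t))/‖p_j − φ(t)‖} g*_j for all t ≥ 0. Then ‖φ(t) − p*‖ is nonincreasing, φ(t) → p* as t → ∞, and there exists λ > 0 such that ‖φ(t) − p*‖ ≤ e^{−λ t} ‖φ(0) − p*‖ for all t ≥ 0; i.e., p* is a globally exponentially stable equilibrium. -/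

import Mathlib

open RealInnerProductSpace

/-- `bproj g v` is the orthogonal projection of `v` onto the orthogonal
complement of `g`, i.e. `P_g v = v - (⟪g,v⟫/‖g‖²) • g`. -/
noncomputable def bproj {d : ℕ} (g v : EuclideanSpace ℝ (Fin d)) :
    EuclideanSpace ℝ (Fin d) :=
  v - ((⟪g, v⟫ : ℝ) / ‖g‖ ^ 2) • g

lemma keyA {d : ℕ} (e a : EuclideanSpace ℝ (Fin d)) (ha : a ≠ 0) (hw : a - e ≠ 0) :
    (⟪e, bproj (‖a - e‖⁻¹ • (a - e)) (‖a‖⁻¹ • a)⟫ : ℝ) =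
      (‖e‖ ^ 2 * ‖a‖ ^ 2 - ⟪e, a⟫ ^ 2) / (‖a‖ * ‖a - e‖ ^ 2) := by
  have ha' : ‖a‖ ≠ 0 := norm_ne_zero_iff.mpr ha
  have hw' : ‖a - e‖ ≠ 0 := norm_ne_zero_iff.mpr hw
  have hnw : ‖(‖a - e‖⁻¹ • (a - e) : EuclideanSpace ℝ (Fin d))‖ = 1 := by
    rw [norm_smul, norm_inv, norm_norm, inv_mul_cancel₀ hw']
  have hsq : ‖a - e‖ ^ 2 = ‖a‖ ^ 2 - 2 * ⟪a, e⟫ + ‖e‖ ^ 2 := by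
    rw [norm_sub_sq_real]
  rw [bproj, hnw]
  simp only [inner_sub_left, inner_sub_right, real_inner_smul_left, real_inner_smul_right,
    real_inner_self_eq_norm_sq, real_inner_comm a e, real_inner_comm (a - e) e, one_pow, div_one]
  generalize hgen : (⟪a, e⟫ : ℝ) = s at hsq ⊢
  have h1 : (0:ℝ) < ‖a‖ := lt_of_le_of_ne (norm_nonneg a) (Ne.symm ha')
  have h2 : (0:ℝ) < ‖a - e‖ := lt_of_le_of_ne (norm_nonneg _) (Ne.symm hw')
  field_simp
  linear_combination s * hsq

lemma quadB {d m : ℕ} (hd : 1 ≤ d) (a : Fin m → EuclideanSpace ℝ (Fin d)) (c : Fin m → ℝ)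
    (hpos : ∀ e : EuclideanSpace ℝ (Fin d), ‖e‖ = 1 →
      0 < ∑ j, c j * (‖e‖ ^ 2 * ‖a j‖ ^ 2 - ⟪e, a j⟫ ^ 2)) :
    ∃ lam : ℝ, 0 < lam ∧ ∀ e : EuclideanSpace ℝ (Fin d),
      lam * ‖e‖ ^ 2 ≤ ∑ j, c j * (‖e‖ ^ 2 * ‖a j‖ ^ 2 - ⟪e, a j⟫ ^ 2) := by
  set F : EuclideanSpace ℝ (Fin d) → ℝ :=
    fun e => ∑ j, c j * (‖e‖ ^ 2 * ‖a j‖ ^ 2 - ⟪e, a j⟫ ^ 2) with hF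
  have hcont : Continuous F := by
    apply continuous_finset_sum
    intro j _
    exact (continuous_const.mul ((((continuous_norm).pow 2).mul continuous_const).sub
      (((continuous_id.inner continuous_const)).pow 2)))
  have hsph : (Metric.sphere (0 : EuclideanSpace ℝ (Fin d)) 1).Nonempty := by
    refine ⟨EuclideanSpace.single ⟨0, hd⟩ (1 : ℝ), ?_⟩
    simp [EuclideanSpace.norm_single]
  obtain ⟨x0, hx0, hmin⟩ := (isCompact_sphere (0 : EuclideanSpace ℝ (Fin d)) 1).exists_isMinOn
    hsph hcont.continuousOn
  have hx0n : ‖x0‖ = 1 := by simpa using hx0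
  refine ⟨F x0, hpos x0 hx0n, ?_⟩
  have hhom : ∀ (r : ℝ) (u : EuclideanSpace ℝ (Fin d)), F (r • u) = r ^ 2 * F u := by
    intro r u
    rw [hF, Finset.mul_sum]
    refine Finset.sum_congr rfl fun j _ => ?_
    rw [norm_smul, real_inner_smul_left, Real.norm_eq_abs, mul_pow, mul_pow, sq_abs]
    ring
  intro e
  rcases eq_or_ne e 0 with he | he
  · simp [he, hF]
  · have hne : ‖e‖ ≠ 0 := norm_ne_zero_iff.mpr he
    have hu : ‖(‖e‖⁻¹ • e : EuclideanSpace ℝ (Fin d))‖ = 1 := by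
      rw [norm_smul, norm_inv, norm_norm, inv_mul_cancel₀ hne]
    have h1 : F x0 ≤ F (‖e‖⁻¹ • e) := hmin (by simpa using hu)
    have h2 : F e = ‖e‖ ^ 2 * F (‖e‖⁻¹ • e) := by
      have := hhom ‖e‖ (‖e‖⁻¹ • e)
      rwa [smul_smul, mul_inv_cancel₀ hne, one_smul] at this
    calc F x0 * ‖e‖ ^ 2 ≤ F (‖e‖⁻¹ • e) * ‖e‖ ^ 2 := by
          have : (0:ℝ) ≤ ‖e‖ ^ 2 := sq_nonneg _
          nlinarith
      _ = F e := by rw [h2]; ring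

/-- Global exponential stability of the target follower position `p*` in the
1-to-many system: along any solution `φ` of
`φ' = −Σ_j P_{(p_j − φ)/‖p_j − φ‖} g*_j` avoiding the leaders, the distance
`‖φ(t) − p*‖` is nonincreasing, `φ(t) → p*`, and the convergence is
exponential. -/
theorem stmt8 (d m : ℕ) (hd : 2 ≤ d) (hm : 2 ≤ m)
    (p : Fin m → EuclideanSpace ℝ (Fin d)) (pstar : EuclideanSpace ℝ (Fin d))
    (hne : ∀ j, pstar ≠ p j)
    (gstar : Fin m → EuclideanSpace ℝ (Fin d))
    (hgs : ∀ j, gstar j = (‖p j - pstar‖)⁻¹ • (p j - pstar))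
    (hnp : ∀ i j : Fin m, i ≠ j → ∀ c : ℝ, gstar j ≠ c • gstar i)
    (φ : ℝ → EuclideanSpace ℝ (Fin d))
    (hφne : ∀ t : ℝ, 0 ≤ t → ∀ j, φ t ≠ p j)
    (hφ : ∀ t : ℝ, 0 ≤ t → HasDerivAt φ
      (-(∑ j, bproj ((‖p j - φ t‖)⁻¹ • (p j - φ t)) (gstar j))) t) :
    AntitoneOn (fun t => ‖φ t - pstar‖) (Set.Ici (0 : ℝ)) ∧
    Filter.Tendsto φ Filter.atTop (nhds pstar) ∧
    ∃ lam : ℝ, 0 < lam ∧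
      ∀ t : ℝ, 0 ≤ t → ‖φ t - pstar‖ ≤ Real.exp (-lam * t) * ‖φ 0 - pstar‖ := by
  have ha : ∀ j, p j - pstar ≠ 0 := fun j => sub_ne_zero.mpr (Ne.symm (hne j))
  have haN : ∀ j, (0:ℝ) < ‖p j - pstar‖ := fun j => norm_pos_iff.mpr (ha j)
  have hCS : ∀ x y : EuclideanSpace ℝ (Fin d), (⟪x, y⟫ : ℝ) ^ 2 ≤ ‖x‖ ^ 2 * ‖y‖ ^ 2 := by
    intro x y
    have h := real_inner_mul_inner_self_le x y
    rw [real_inner_self_eq_norm_sq, real_inner_self_eq_norm_sq] at h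
    nlinarith [h]
  set S : ℝ → ℝ := fun t => ∑ j,
    (‖φ t - pstar‖ ^ 2 * ‖p j - pstar‖ ^ 2 - (⟪φ t - pstar, p j - pstar⟫ : ℝ) ^ 2) /
      (‖p j - pstar‖ * ‖p j - φ t‖ ^ 2) with hSdef
  set f : ℝ → ℝ := fun t => ‖φ t - pstar‖ ^ 2 with hfdef
  have hfnn : ∀ t, 0 ≤ f t := fun t => sq_nonneg _
  have hSnn : ∀ t, 0 ≤ S t := by
    intro t
    apply Finset.sum_nonneg
    intro j _
    apply div_nonneg (sub_nonneg.mpr (hCS _ _))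
    positivity
  -- pointwise inner product formula
  have hterm : ∀ t : ℝ, 0 ≤ t → ∀ j,
      (⟪φ t - pstar, bproj ((‖p j - φ t‖)⁻¹ • (p j - φ t)) (gstar j)⟫ : ℝ) =
        (‖φ t - pstar‖ ^ 2 * ‖p j - pstar‖ ^ 2 - (⟪φ t - pstar, p j - pstar⟫ : ℝ) ^ 2) /
          (‖p j - pstar‖ * ‖p j - φ t‖ ^ 2) := by
    intro t ht j
    have hw : p j - φ t = (p j - pstar) - (φ t - pstar) := (sub_sub_sub_cancel_right _ _ _).symm
    rw [hgs j, hw]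
    exact keyA (φ t - pstar) (p j - pstar) (ha j)
      (by rw [← hw]; exact sub_ne_zero.mpr (Ne.symm (hφne t ht j)))
  -- derivative of f
  have hD : ∀ t : ℝ, 0 ≤ t → HasDerivAt f (-2 * S t) t := by
    intro t ht
    have hψd : HasDerivAt (fun s => φ s - pstar)
        (-(∑ j, bproj ((‖p j - φ t‖)⁻¹ • (p j - φ t)) (gstar j))) t := (hφ t ht).sub_const pstar
    have h2 := hψd.inner ℝ hψd
    have hval : (⟪φ t - pstar,
        -(∑ j, bproj ((‖p j - φ t‖)⁻¹ • (p j - φ t)) (gstar j))⟫ : ℝ) = -S t := by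
      rw [inner_neg_right, inner_sum, hSdef]
      rw [neg_inj]
      exact Finset.sum_congr rfl fun j _ => hterm t ht j
    have h3 : (⟪φ t - pstar, -(∑ j, bproj ((‖p j - φ t‖)⁻¹ • (p j - φ t)) (gstar j))⟫ : ℝ) +
        ⟪-(∑ j, bproj ((‖p j - φ t‖)⁻¹ • (p j - φ t)) (gstar j)), φ t - pstar⟫ = -2 * S t := by
      rw [hval, real_inner_comm, hval]
      ring
    rw [← h3] at *
    have h4 : f = fun s => (⟪φ s - pstar, φ s - pstar⟫ : ℝ) := by
      funext s
      rw [hfdef, real_inner_self_eq_norm_sq]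
    rw [h4]
    exact h2
  -- f is antitone on [0, ∞)
  have hfanti : AntitoneOn f (Set.Ici (0:ℝ)) := by
    apply antitoneOn_of_deriv_nonpos (convex_Ici 0)
    · exact fun t ht => (hD t ht).continuousAt.continuousWithinAt
    · intro t ht
      rw [interior_Ici] at ht
      exact (hD t (le_of_lt ht)).differentiableAt.differentiableWithinAt
    · intro t ht
      rw [interior_Ici] at ht
      rw [(hD t (le_of_lt ht)).deriv]
      nlinarith [hSnn t]
  have hanti : AntitoneOn (fun t => ‖φ t - pstar‖) (Set.Ici (0:ℝ)) := by
    intro s hs t ht hst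
    have h := hfanti hs ht hst
    simp only [hfdef] at h
    have := Real.sqrt_le_sqrt h
    rwa [Real.sqrt_sq (norm_nonneg _), Real.sqrt_sq (norm_nonneg _)] at this
  have hbnd : ∀ t : ℝ, 0 ≤ t → ‖φ t - pstar‖ ≤ ‖φ 0 - pstar‖ :=
    fun t ht => hanti (Set.self_mem_Ici) ht ht
  -- coefficients for the quadratic lower bound
  set R0 : ℝ := ‖φ 0 - pstar‖ with hR0
  set c : Fin m → ℝ := fun j => (‖p j - pstar‖ * (‖p j - pstar‖ + R0) ^ 2)⁻¹ with hcdef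
  have hR0nn : (0:ℝ) ≤ R0 := norm_nonneg _
  have hc : ∀ j, 0 < c j := by
    intro j
    exact inv_pos.mpr (mul_pos (haN j)
      (pow_pos (add_pos_of_pos_of_nonneg (haN j) hR0nn) 2))
  -- positivity of the quadratic form on the unit sphere
  have hpar : ∀ (e : EuclideanSpace ℝ (Fin d)) (j : Fin m), e ≠ 0 →
      ‖e‖ ^ 2 * ‖p j - pstar‖ ^ 2 ≤ (⟪e, p j - pstar⟫ : ℝ) ^ 2 →
      ∃ r : ℝ, r ≠ 0 ∧ p j - pstar = r • e := by
    intro e j he0 hle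
    have heN : (0:ℝ) < ‖e‖ := norm_pos_iff.mpr he0
    have heq : (⟪e, p j - pstar⟫ : ℝ) ^ 2 = (‖e‖ * ‖p j - pstar‖) ^ 2 := by
      have := hCS e (p j - pstar)
      nlinarith [hle]
    have hcases : (⟪e, p j - pstar⟫ : ℝ) = ‖e‖ * ‖p j - pstar‖ ∨
        (⟪e, p j - pstar⟫ : ℝ) = -(‖e‖ * ‖p j - pstar‖) := sq_eq_sq_iff_eq_or_eq_neg.mp heq
    rcases hcases with hc1 | hc2
    · have hthis := inner_eq_norm_mul_iff_real.mp hc1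
      -- hthis : ‖p j - pstar‖ • e = ‖e‖ • (p j - pstar)
      refine ⟨‖e‖⁻¹ * ‖p j - pstar‖, ne_of_gt (mul_pos (inv_pos.mpr heN) (haN j)), ?_⟩
      rw [mul_smul, hthis, smul_smul, inv_mul_cancel₀ (ne_of_gt heN), one_smul]
    · have hc2' : (⟪e, -(p j - pstar)⟫ : ℝ) = ‖e‖ * ‖-(p j - pstar)‖ := by
        rw [inner_neg_right, norm_neg, hc2, neg_neg]
      have hthis := inner_eq_norm_mul_iff_real.mp hc2'
      rw [norm_neg] at hthis
      -- hthis : ‖p j - pstar‖ • e = ‖e‖ • (-(p j - pstar))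
      refine ⟨-(‖e‖⁻¹ * ‖p j - pstar‖),
        neg_ne_zero.mpr (ne_of_gt (mul_pos (inv_pos.mpr heN) (haN j))), ?_⟩
      rw [neg_smul, mul_smul, hthis, smul_smul, inv_mul_cancel₀ (ne_of_gt heN), one_smul, neg_neg]
  have hpos : ∀ e : EuclideanSpace ℝ (Fin d), ‖e‖ = 1 →
      0 < ∑ j, c j * (‖e‖ ^ 2 * ‖p j - pstar‖ ^ 2 - (⟪e, p j - pstar⟫ : ℝ) ^ 2) := by
    intro e he1
    have he0 : e ≠ 0 := by
      intro h
      rw [h, norm_zero] at he1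
      exact one_ne_zero he1.symm
    apply Finset.sum_pos'
    · exact fun j _ => mul_nonneg (hc j).le (sub_nonneg.mpr (hCS _ _))
    · -- at least one strictly positive term
      by_contra hcon
      push_neg at hcon
      have hall : ∀ j : Fin m, ∃ r : ℝ, r ≠ 0 ∧ p j - pstar = r • e := by
        intro j
        apply hpar e j he0
        have h := hcon j (Finset.mem_univ j)
        have h2 := mul_nonneg (hc j).le (sub_nonneg.mpr (hCS e (p j - pstar)))
        have h3 : c j * (‖e‖ ^ 2 * ‖p j - pstar‖ ^ 2 - (⟪e, p j - pstar⟫ : ℝ) ^ 2) = 0 :=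
          le_antisymm h h2
        have h4 := (mul_eq_zero.mp h3).resolve_left (ne_of_gt (hc j))
        linarith [sub_eq_zero.mp h4]
      have hi0 : (⟨0, by omega⟩ : Fin m) ≠ ⟨1, by omega⟩ := by
        intro h
        simpa using congrArg Fin.val h
      obtain ⟨r0, hr0, hpe0⟩ := hall ⟨0, by omega⟩
      obtain ⟨r1, hr1, hpe1⟩ := hall ⟨1, by omega⟩
      set A0 : ℝ := ‖(r0 • e : EuclideanSpace ℝ (Fin d))‖⁻¹ * r0 with hA0def
      set A1 : ℝ := ‖(r1 • e : EuclideanSpace ℝ (Fin d))‖⁻¹ * r1 with hA1def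
      have hA0 : A0 ≠ 0 :=
        mul_ne_zero (inv_ne_zero (norm_ne_zero_iff.mpr (smul_ne_zero hr0 he0))) hr0
      have hg0 : gstar ⟨0, by omega⟩ = A0 • e := by
        rw [hgs, hpe0, smul_smul, hA0def]
      have hg1 : gstar ⟨1, by omega⟩ = A1 • e := by
        rw [hgs, hpe1, smul_smul, hA1def]
      apply hnp ⟨0, by omega⟩ ⟨1, by omega⟩ hi0 (A1 * A0⁻¹)
      rw [hg1, hg0, smul_smul, mul_assoc, inv_mul_cancel₀ hA0, mul_one]
  obtain ⟨lam, hlam, hQ⟩ := quadB (by omega) (fun j => p j - pstar) c hpos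
  -- S dominates lam * f on [0, ∞)
  have hSlow : ∀ t : ℝ, 0 ≤ t → lam * f t ≤ S t := by
    intro t ht
    refine le_trans (hQ (φ t - pstar)) ?_
    rw [hSdef]
    apply Finset.sum_le_sum
    intro j _
    have hwpos : (0:ℝ) < ‖p j - φ t‖ := norm_pos_iff.mpr (sub_ne_zero.mpr (Ne.symm (hφne t ht j)))
    have hden : (0:ℝ) < ‖p j - pstar‖ * ‖p j - φ t‖ ^ 2 :=
      mul_pos (haN j) (pow_pos hwpos 2)
    have hnum : (0:ℝ) ≤ ‖φ t - pstar‖ ^ 2 * ‖p j - pstar‖ ^ 2 -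
        (⟪φ t - pstar, p j - pstar⟫ : ℝ) ^ 2 := sub_nonneg.mpr (hCS _ _)
    have hwle : ‖p j - φ t‖ ≤ ‖p j - pstar‖ + R0 := by
      have : p j - φ t = (p j - pstar) - (φ t - pstar) := (sub_sub_sub_cancel_right _ _ _).symm
      rw [this]
      refine le_trans (norm_sub_le _ _) ?_
      exact add_le_add_right (hbnd t ht) _
    have hdle : ‖p j - pstar‖ * ‖p j - φ t‖ ^ 2 ≤ ‖p j - pstar‖ * (‖p j - pstar‖ + R0) ^ 2 := by
      apply mul_le_mul_of_nonneg_left _ (haN j).le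
      exact pow_le_pow_left₀ hwpos.le hwle 2
    have hinv : c j ≤ (‖p j - pstar‖ * ‖p j - φ t‖ ^ 2)⁻¹ := by
      rw [hcdef]
      exact inv_anti₀ hden hdle
    rw [div_eq_mul_inv]
    calc c j * (‖φ t - pstar‖ ^ 2 * ‖p j - pstar‖ ^ 2 - (⟪φ t - pstar, p j - pstar⟫ : ℝ) ^ 2)
        = (‖φ t - pstar‖ ^ 2 * ‖p j - pstar‖ ^ 2 - (⟪φ t - pstar, p j - pstar⟫ : ℝ) ^ 2) * c j := by
          ring
      _ ≤ _ := mul_le_mul_of_nonneg_left hinv hnum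
  -- Gronwall via monotonicity of exp(2 lam t) * f t
  have hg : AntitoneOn (fun t => Real.exp (2 * lam * t) * f t) (Set.Ici (0:ℝ)) := by
    have hgd : ∀ t : ℝ, 0 ≤ t → HasDerivAt (fun t => Real.exp (2 * lam * t) * f t)
        (Real.exp (2 * lam * t) * (2 * lam) * f t + Real.exp (2 * lam * t) * (-2 * S t)) t := by
      intro t ht
      have hE : HasDerivAt (fun t : ℝ => Real.exp (2 * lam * t))
          (Real.exp (2 * lam * t) * (2 * lam)) t := by
        simpa [Function.comp_def] using (Real.hasDerivAt_exp (2 * lam * t)).comp t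
          ((hasDerivAt_id t).const_mul (2 * lam))
      simpa [mul_assoc, Pi.mul_def] using hE.mul (hD t ht)
    apply antitoneOn_of_deriv_nonpos (convex_Ici 0)
    · exact fun t ht => (hgd t ht).continuousAt.continuousWithinAt
    · intro t ht
      rw [interior_Ici] at ht
      exact (hgd t (le_of_lt ht)).differentiableAt.differentiableWithinAt
    · intro t ht
      rw [interior_Ici] at ht
      rw [(hgd t (le_of_lt ht)).deriv]
      have h1 := hSlow t (le_of_lt ht)
      have h2 := Real.exp_pos (2 * lam * t)
      nlinarith [h1, h2]
  -- exponential bound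
  have hexp : ∀ t : ℝ, 0 ≤ t → ‖φ t - pstar‖ ≤ Real.exp (-lam * t) * ‖φ 0 - pstar‖ := by
    intro t ht
    have h := hg Set.self_mem_Ici ht ht
    simp only [mul_zero, Real.exp_zero, one_mul] at h
    -- h : exp (2 lam t) * f t ≤ f 0
    have hE := Real.exp_pos (2 * lam * t)
    have h3 : Real.exp (-lam * t) ^ 2 * Real.exp (2 * lam * t) = 1 := by
      rw [sq, ← Real.exp_add, ← Real.exp_add, ← Real.exp_zero]
      congr 1
      ring
    have h2 : f t ≤ Real.exp (-lam * t) ^ 2 * f 0 := by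
      calc f t = (Real.exp (-lam * t) ^ 2 * Real.exp (2 * lam * t)) * f t := by
            rw [h3, one_mul]
        _ = Real.exp (-lam * t) ^ 2 * (Real.exp (2 * lam * t) * f t) := by ring
        _ ≤ Real.exp (-lam * t) ^ 2 * f 0 := mul_le_mul_of_nonneg_left h (sq_nonneg _)
    have h4 : ‖φ t - pstar‖ ^ 2 ≤ (Real.exp (-lam * t) * ‖φ 0 - pstar‖) ^ 2 := by
      rw [mul_pow]
      exact h2
    have h5 : (0:ℝ) ≤ Real.exp (-lam * t) * ‖φ 0 - pstar‖ := by positivity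
    nlinarith [norm_nonneg (φ t - pstar), h4, h5]
  refine ⟨hanti, ?_, lam, hlam, hexp⟩
  -- convergence
  rw [tendsto_iff_dist_tendsto_zero]
  have h2 : Filter.Tendsto (fun t : ℝ => lam * t) Filter.atTop Filter.atTop :=
    Filter.Tendsto.const_mul_atTop hlam Filter.tendsto_id
  have h1 : Filter.Tendsto (fun t : ℝ => Real.exp (-lam * t)) Filter.atTop (nhds 0) := by
    have h3 := Real.tendsto_exp_neg_atTop_nhds_zero.comp h2
    exact Filter.Tendsto.congr (fun t => by simp [Function.comp, neg_mul]) h3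
  have h4 : Filter.Tendsto (fun t : ℝ => Real.exp (-lam * t) * ‖φ 0 - pstar‖)
      Filter.atTop (nhds 0) := by
    simpa using h1.mul_const ‖φ 0 - pstar‖
  apply squeeze_zero' (Filter.Eventually.of_forall fun t => dist_nonneg) _ h4
  filter_upwards [Filter.eventually_ge_atTop (0:ℝ)] with t ht
  rw [dist_eq_norm]
  exact hexp t ht
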